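/- For every n ∈ ℕ, every λ ∈ (0,n), every x ∈ {0,1}^n, and every r ∈ {0,1,…,n}, the probability that C_λ(x) = r equals the probability that ∑_{i=1}^n y_i = r, where y_1,…,y_n are independent with y_i ~ R_{n,λ}(x_i). -/

import Mathlib

open scoped ENNReal Classical

noncomputable section

namespace ShuffledDP

universe u v w

lemma half_le_one : (2⁻¹ : ℝ≥0∞) ≤ 1 := by
  simp [ENNReal.inv_le_one]

/-- Independent samples from a finite family of PMFs, collected (in order) as a list. -/
noncomputable def indep {α : Type u} : (n : ℕ) → (Fin n → PMF α) → PMF (List α)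
  | 0, _ => PMF.pure []
  | n + 1, f =>
      (f 0).bind fun y => (indep n fun i => f i.succ).bind fun ys => PMF.pure (y :: ys)

/-- `(ε, δ)`-differential privacy of a mechanism `M` with respect to a
neighboring relation `nbr` on inputs. -/
def DPFor {I : Type u} {Z : Type v} (nbr : I → I → Prop) (M : I → PMF Z) (ε δ : ℝ) : Prop :=
  ∀ x x', nbr x x' → ∀ T : Set Z,
    (M x).toOuterMeasure T ≤
      ENNReal.ofReal (Real.exp ε) * (M x').toOuterMeasure T + ENNReal.ofReal δ

/-- Two datasets are neighbors if they differ in at most one coordinate. -/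
def Neighbor {n : ℕ} {X : Type u} (x x' : Fin n → X) : Prop :=
  ∃ j, ∀ i, i ≠ j → x i = x' i

/-- The randomized-response local randomizer `R_{n,λ}`: output the input bit with
probability `1 - λ/n` and a uniformly random bit with probability `λ/n`. -/
noncomputable def rr (n : ℕ) (lam : ℝ) (x : Bool) : PMF Bool :=
  (PMF.bernoulli (min (ENNReal.ofReal (lam / n)) 1).toNNReal ((ENNReal.toNNReal_mono ENNReal.one_ne_top (min_le_right _ _)).trans_eq ENNReal.toNNReal_one)).bind fun b =>
    if b then PMF.bernoulli (2⁻¹ : ℝ≥0∞).toNNReal ((ENNReal.toNNReal_mono ENNReal.one_ne_top half_le_one).trans_eq ENNReal.toNNReal_one) else PMF.pure x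

/-- Binomial distribution, valued in `ℕ`. -/
noncomputable def binom (p : ℝ≥0∞) (h : p ≤ 1) (m : ℕ) : PMF ℕ :=
  (PMF.binomial p.toNNReal ((ENNReal.toNNReal_mono ENNReal.one_ne_top h).trans_eq ENNReal.toNNReal_one) m).map Fin.val

/-- Uniform distribution over the subsets of `Fin n` of size `s`. -/
noncomputable def uniformSubset (n s : ℕ) : PMF (Finset (Fin n)) :=
  if h : ((Finset.univ : Finset (Fin n)).powersetCard s).Nonempty then
    PMF.uniformOfFinset _ h
  else PMF.pure ∅

/-- `∑_{i ∉ H} x_i` for a boolean dataset `x`. -/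
def sumOutside {n : ℕ} (H : Finset (Fin n)) (x : Fin n → Bool) : ℕ :=
  ∑ i ∈ Hᶜ, (if x i then 1 else 0)

/-- The mechanism `C_H`: output `∑_{i ∉ H} x_i + B` with `B ~ Bin(|H|, 1/2)`. -/
noncomputable def CH (n : ℕ) (H : Finset (Fin n)) (x : Fin n → Bool) : PMF ℕ :=
  (binom 2⁻¹ half_le_one H.card).map fun B => sumOutside H x + B

/-- The mechanism `C_s`: sample `H` uniformly among size-`s` subsets, then run `C_H`. -/
noncomputable def Cs (n s : ℕ) (x : Fin n → Bool) : PMF ℕ :=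
  (uniformSubset n s).bind fun H => CH n H x

/-- The mechanism `C_λ`: sample `s ~ Bin(n, λ/n)`, then run `C_s`. -/
noncomputable def Cmech (n : ℕ) (lam : ℝ) (x : Fin n → Bool) : PMF ℕ :=
  (binom (min (ENNReal.ofReal (lam / n)) 1) (min_le_right _ _) n).bind fun s => Cs n s x

/-- The shuffled bit-sum mechanism `Π_{n,λ}`: the random multiset `{y_1, …, y_n}`
of the outputs `y_i ~ R_{n,λ}(x_i)`. -/
noncomputable def shuffleBit (n : ℕ) (lam : ℝ) (x : Fin n → Bool) : PMF (Multiset Bool) :=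
  (indep n fun i => rr n lam (x i)).map fun l => (l : Multiset Bool)

/-- The bit-sum protocol output `P_{n,λ}(x) = (n/(n-λ)) (∑ y_i - λ/2)`. -/
noncomputable def bitSumOutput (n : ℕ) (lam : ℝ) (x : Fin n → Bool) : PMF ℝ :=
  (indep n fun i => rr n lam (x i)).map fun l =>
    ((n : ℝ) / (n - lam)) * ((l.count true : ℝ) - lam / 2)

/-- The randomized-rounding encoder `E_r`. -/
noncomputable def encoder (r : ℕ) (x : ℝ) : PMF (Fin r → Bool) :=
  (PMF.bernoulli (min (ENNReal.ofReal (x * r - ⌈x * r⌉ + 1)) 1).toNNReal ((ENNReal.toNNReal_mono ENNReal.one_ne_top (min_le_right _ _)).trans_eq ENNReal.toNNReal_one)).map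
    fun b i => if ((i : ℕ) : ℤ) + 1 < ⌈x * r⌉ then true
      else if ((i : ℕ) : ℤ) + 1 = ⌈x * r⌉ then b else false

/-- The real-sum shuffled mechanism `Π^ℝ_{n,λ,r}`: the random multiset of all `n·r`
bits `y_{i,j} ~ R_{n,λ}(b_{i,j})` where `(b_{i,1},…,b_{i,r}) = E_r(x_i)`. -/
noncomputable def realShuffle (n : ℕ) (lam : ℝ) (r : ℕ) (X : Fin n → ℝ) :
    PMF (Multiset Bool) :=
  (indep n fun i =>
      (encoder r (X i)).bind fun b =>
        (indep r fun j => rr n lam (b j)).map fun l => (l : Multiset Bool)).map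
    fun ms => ms.sum

/-- The real-sum protocol output `z = (1/r)(n/(n-λ)) (∑_{i,j} y_{i,j} - λ r/2)`. -/
noncomputable def realOutput (n : ℕ) (lam : ℝ) (r : ℕ) (X : Fin n → ℝ) : PMF ℝ :=
  (realShuffle n lam r X).map fun m =>
    (1 / (r : ℝ)) * ((n : ℝ) / (n - lam)) * ((m.count true : ℝ) - lam * r / 2)

/-- The shuffled mechanism associated with a randomizer producing a multiset of
messages: the union (multiset sum) of the `n` users' message multisets. -/
noncomputable def shuffM {𝒳 : Type u} {𝒴 : Type v} (n : ℕ) (R : 𝒳 → PMF (Multiset 𝒴))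
    (x : Fin n → 𝒳) : PMF (Multiset 𝒴) :=
  (indep n fun i => R (x i)).map fun l => l.sum

/-- The multiset of the `m` messages output by an `m`-message randomizer. -/
noncomputable def vecR {𝒳 : Type u} {𝒴 : Type v} {m : ℕ} (R : 𝒳 → PMF (Fin m → 𝒴)) :
    𝒳 → PMF (Multiset 𝒴) :=
  fun a => (R a).map fun v => ((List.ofFn v : List 𝒴) : Multiset 𝒴)

/-- The one-message shuffled mechanism `Π_R`: the random multiset `{R(x_1), …, R(x_n)}`. -/
noncomputable def shuffle1 {𝒳 : Type u} {𝒴 : Type v} (n : ℕ) (R : 𝒳 → PMF 𝒴)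
    (x : Fin n → 𝒳) : PMF (Multiset 𝒴) :=
  (indep n fun i => R (x i)).map fun l => (l : Multiset 𝒴)

/-- `(ε, δ)`-differential privacy of a local randomizer (any two inputs are neighbors). -/
def RandDP {𝒳 : Type u} {𝒴 : Type v} (R : 𝒳 → PMF 𝒴) (ε δ : ℝ) : Prop :=
  ∀ x x' : 𝒳, ∀ T : Set 𝒴,
    (R x).toOuterMeasure T ≤
      ENNReal.ofReal (Real.exp ε) * (R x').toOuterMeasure T + ENNReal.ofReal δ

/-- The output of the local protocol `(R, A)`. -/
noncomputable def localOut {𝒳 : Type u} {𝒴 : Type v} {𝒵 : Type w} (n : ℕ)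
    (R : 𝒳 → PMF 𝒴) (A : List 𝒴 → 𝒵) (X : Fin n → 𝒳) : PMF 𝒵 :=
  (indep n fun i => R (X i)).map A

/-- `(a, b)`-accuracy of a protocol `P` for a function `f` w.r.t. a distance `d`. -/
def AccFor {I : Type u} {𝒵 : Type w} (P : I → PMF 𝒵) (f : I → 𝒵) (d : 𝒵 → 𝒵 → ℝ)
    (a b : ℝ) : Prop :=
  ∀ X, ENNReal.ofReal (1 - b) ≤ (P X).toOuterMeasure {z | d z (f X) ≤ a}


/-! ### Auxiliary lemmas for `stmt0` -/

section Aux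

lemma indep_map_apply :
    ∀ (n : ℕ) (f : Fin n → PMF Bool) (g : List Bool → ℕ) (r : ℕ),
      ((indep n f).map g) r
        = ∑ y : Fin n → Bool, if r = g (List.ofFn y) then ∏ i, f i (y i) else 0
  | 0, f, g, r => by
      simp [indep, PMF.pure_map, PMF.pure_apply, List.ofFn_zero]
  | n + 1, f, g, r => by
      have h1 : indep (n + 1) f
          = (f 0).bind fun y => (indep n fun i => f i.succ).bind fun ys =>
              PMF.pure (y :: ys) := rfl
      have h2 : ∀ b : Bool,
          (((indep n fun i => f i.succ).bind fun ys => PMF.pure (b :: ys)).map g)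
            = (indep n fun i => f i.succ).map fun ys => g (b :: ys) := by
        intro b
        rw [PMF.map_bind]
        simp only [PMF.pure_map]
        rfl
      rw [h1, PMF.map_bind, PMF.bind_apply, tsum_fintype]
      simp only [h2, indep_map_apply n]
      rw [← Equiv.sum_comp (Fin.consEquiv (fun _ : Fin (n + 1) => Bool))
        (fun y : Fin (n + 1) → Bool => if r = g (List.ofFn y) then ∏ i, f i (y i) else 0)]
      rw [Fintype.sum_prod_type]
      apply Finset.sum_congr rfl
      intro b _
      rw [Finset.mul_sum]
      apply Finset.sum_congr rfl
      intro v _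
      have hofn : List.ofFn (Fin.cons b v : Fin (n + 1) → Bool) = b :: List.ofFn v := by
        rw [List.ofFn_succ]
        simp [Fin.cons_zero, Fin.cons_succ]
      have hprod : (∏ i, f i ((Fin.cons b v : Fin (n + 1) → Bool) i))
          = f 0 b * ∏ i, f i.succ (v i) := by
        rw [Fin.prod_univ_succ]
        simp [Fin.cons_zero, Fin.cons_succ]
      simp only [Fin.consEquiv_apply, hofn, hprod]
      by_cases h : r = g (b :: List.ofFn v) <;> simp [h]

lemma count_ofFn : ∀ (n : ℕ) (y : Fin n → Bool),
    (List.ofFn y).count true = ∑ i, if y i then 1 else 0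
  | 0, y => by simp
  | n + 1, y => by
      rw [List.ofFn_succ, List.count_cons, count_ofFn n, Fin.sum_univ_succ]
      cases h : y 0 <;> simp [h, add_comm]

lemma binom_apply (q : ℝ≥0∞) (h : q ≤ 1) (m k : ℕ) :
    binom q h m k = if k ≤ m then q ^ k * (1 - q) ^ (m - k) * (m.choose k) else 0 := by
  rw [binom, PMF.map_apply, tsum_fintype]
  split_ifs with hk
  · rw [Finset.sum_eq_single (⟨k, Nat.lt_succ_of_le hk⟩ : Fin (m + 1))]
    · rw [if_pos rfl, PMF.binomial_apply, ENNReal.coe_toNNReal (ne_top_of_le_ne_top ENNReal.one_ne_top h)]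
      congr 2
    · intro i _ hne
      rw [if_neg]
      intro he
      exact hne (Fin.eq_of_val_eq he.symm)
    · intro hmem
      exact absurd (Finset.mem_univ _) hmem
  · apply Finset.sum_eq_zero
    intro i _
    rw [if_neg]
    intro he
    exact hk (he ▸ i.is_le)

lemma rr_apply (n : ℕ) (lam : ℝ) (x y : Bool) :
    rr n lam x y = min (ENNReal.ofReal (lam / n)) 1 * 2⁻¹
      + (1 - min (ENNReal.ofReal (lam / n)) 1) * (if y = x then 1 else 0) := by
  rw [rr, PMF.bind_apply, tsum_bool]
  have hm : (min (ENNReal.ofReal (lam / n)) 1) ≠ ⊤ := ne_top_of_le_ne_top ENNReal.one_ne_top (min_le_right _ _)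
  have h2 : ((2⁻¹ : ℝ≥0∞).toNNReal : ℝ≥0∞) = 2⁻¹ := ENNReal.coe_toNNReal (by simp)
  have h2' : (((ENNReal.toNNReal 2)⁻¹ : NNReal) : ℝ≥0∞) = 2⁻¹ := by
    rw [← ENNReal.toNNReal_inv]; exact h2
  cases y <;> cases x <;>
    simp [PMF.bernoulli_apply, PMF.pure_apply, ENNReal.one_sub_inv_two, add_comm, ENNReal.coe_toNNReal hm, h2, h2']

lemma CH_apply (n : ℕ) (H : Finset (Fin n)) (x : Fin n → Bool) (r : ℕ) :
    CH n H x r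
      = (if sumOutside H x ≤ r then ((H.card.choose (r - sumOutside H x)) : ℝ≥0∞) else 0)
          * 2⁻¹ ^ H.card := by
  rw [CH, PMF.map_apply]
  split_ifs with hs
  · rw [tsum_eq_single (r - sumOutside H x) (by intro b hb; rw [if_neg]; omega)]
    rw [if_pos (by omega), binom_apply]
    split_ifs with hk
    · rw [ENNReal.one_sub_inv_two, ← pow_add, Nat.add_sub_cancel' hk]
      ring
    · rw [Nat.choose_eq_zero_of_lt (by omega), Nat.cast_zero, zero_mul]
  · rw [ENNReal.tsum_eq_zero.2 (by intro b; rw [if_neg]; omega), zero_mul]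

lemma cnt_split (n : ℕ) (H : Finset (Fin n)) (x y : Fin n → Bool)
    (hy : ∀ i ∈ Hᶜ, y i = x i) :
    (∑ i, if y i then 1 else 0) = (H.filter fun i => y i = true).card + sumOutside H x := by
  rw [← Finset.sum_add_sum_compl H (fun i => if y i then (1 : ℕ) else 0)]
  congr 1
  · rw [Finset.sum_boole, Nat.cast_id]
  · rw [sumOutside]
    exact Finset.sum_congr rfl fun i hi => by rw [hy i hi]

lemma filter_decode (n : ℕ) (H T : Finset (Fin n)) (x : Fin n → Bool) (hTH : T ⊆ H) :
    (H.filter fun i => (if i ∈ T then true else if i ∈ H then false else x i) = true) = T := by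
  ext i
  simp only [Finset.mem_filter]
  constructor
  · rintro ⟨hiH, hi⟩
    by_contra hiT
    rw [if_neg hiT, if_pos hiH] at hi
    exact Bool.false_ne_true hi
  · intro hiT
    exact ⟨hTH hiT, by rw [if_pos hiT]⟩

lemma card_count (n : ℕ) (H : Finset (Fin n)) (x : Fin n → Bool) (r : ℕ) :
    (Finset.univ.filter fun y : Fin n → Bool =>
        (r = ∑ i, if y i then 1 else 0) ∧ ∀ i ∈ Hᶜ, y i = x i).card
      = if sumOutside H x ≤ r then H.card.choose (r - sumOutside H x) else 0 := by
  split_ifs with hs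
  · rw [← Finset.card_powersetCard]
    apply Finset.card_nbij' (fun y => H.filter fun i => y i = true)
      (fun T i => if i ∈ T then true else if i ∈ H then false else x i)
    · intro y hy
      obtain ⟨-, hcnt, hout⟩ := Finset.mem_filter.1 hy
      simp only [Finset.mem_coe, Finset.mem_powersetCard]
      refine ⟨Finset.filter_subset _ _, ?_⟩
      have := cnt_split n H x y hout
      omega
    · intro T hT
      obtain ⟨hTH, hTc⟩ := Finset.mem_powersetCard.1 hT
      have hout : ∀ i ∈ Hᶜ,
          (if i ∈ T then true else if i ∈ H then false else x i) = x i := by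
        intro i hi
        rw [Finset.mem_compl] at hi
        rw [if_neg (fun h => hi (hTH h)), if_neg hi]
      refine Finset.mem_filter.2 ⟨Finset.mem_univ _, ?_, hout⟩
      rw [cnt_split n H x _ hout, filter_decode n H T x hTH, hTc]
      omega
    · intro y hy
      obtain ⟨-, -, hout⟩ := Finset.mem_filter.1 hy
      funext i
      beta_reduce
      by_cases hiH : i ∈ H
      · by_cases hiT : i ∈ H.filter fun j => y j = true
        · rw [if_pos hiT]
          exact ((Finset.mem_filter.1 hiT).2).symm
        · rw [if_neg hiT, if_pos hiH]
          cases hyi : y i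
          · rfl
          · exact absurd (Finset.mem_filter.2 ⟨hiH, hyi⟩) hiT
      · rw [if_neg (fun h => hiH ((Finset.mem_filter.1 h).1)), if_neg hiH]
        exact (hout i (Finset.mem_compl.2 hiH)).symm
    · intro T hT
      obtain ⟨hTH, -⟩ := Finset.mem_powersetCard.1 hT
      exact filter_decode n H T x hTH
  · rw [Finset.card_eq_zero, Finset.filter_eq_empty_iff]
    rintro y - ⟨hcnt, hout⟩
    have := cnt_split n H x y hout
    omega

lemma lhs_eq (n : ℕ) (q : ℝ≥0∞) (hq : q ≤ 1) (x : Fin n → Bool) (r : ℕ) :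
    ((binom q hq n).bind fun s => Cs n s x) r
      = ∑ H ∈ (Finset.univ : Finset (Fin n)).powerset,
          q ^ H.card * (1 - q) ^ (n - H.card) * CH n H x r := by
  classical
  rw [PMF.bind_apply]
  rw [tsum_eq_sum (s := Finset.range (n + 1))
    (by
      intro s hs
      rw [binom_apply, if_neg (by simpa using hs), zero_mul])]
  have hterm : ∀ s ∈ Finset.range (n + 1),
      binom q hq n s * Cs n s x r
        = ∑ H ∈ Finset.powersetCard s (Finset.univ : Finset (Fin n)),
            q ^ H.card * (1 - q) ^ (n - H.card) * CH n H x r := by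
    intro s hs
    rw [Finset.mem_range] at hs
    have hsn : s ≤ n := by omega
    have hne : (Finset.powersetCard s (Finset.univ : Finset (Fin n))).Nonempty := by
      rw [Finset.powersetCard_nonempty]
      simpa using hsn
    have hcard : (Finset.powersetCard s (Finset.univ : Finset (Fin n))).card = n.choose s := by
      rw [Finset.card_powersetCard]; simp
    have hC0 : ((n.choose s : ℝ≥0∞)) ≠ 0 := Nat.cast_ne_zero.2 (Nat.choose_pos hsn).ne'
    have hCt : ((n.choose s : ℝ≥0∞)) ≠ ⊤ := ENNReal.natCast_ne_top _
    rw [Cs, uniformSubset, dif_pos hne, PMF.bind_apply, tsum_fintype, binom_apply, if_pos hsn]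
    have hinner : (∑ H : Finset (Fin n), (PMF.uniformOfFinset _ hne) H * CH n H x r)
        = ∑ H ∈ Finset.powersetCard s (Finset.univ : Finset (Fin n)),
            ((n.choose s : ℝ≥0∞))⁻¹ * CH n H x r := by
      have step : ∀ H : Finset (Fin n), (PMF.uniformOfFinset _ hne) H * CH n H x r
          = if H ∈ Finset.powersetCard s (Finset.univ : Finset (Fin n)) then
              ((n.choose s : ℝ≥0∞))⁻¹ * CH n H x r else 0 := by
        intro H
        rw [PMF.uniformOfFinset_apply, hcard]
        split_ifs <;> simp
      rw [Finset.sum_congr rfl (fun H _ => step H), Finset.sum_ite_mem, Finset.univ_inter]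
    rw [hinner, Finset.mul_sum]
    apply Finset.sum_congr rfl
    intro H hH
    have hHc : H.card = s := (Finset.mem_powersetCard.1 hH).2
    have hrw : q ^ s * (1 - q) ^ (n - s) * ↑(n.choose s) *
          (((n.choose s : ℝ≥0∞))⁻¹ * CH n H x r)
        = q ^ s * (1 - q) ^ (n - s) *
            ((n.choose s : ℝ≥0∞) * ((n.choose s : ℝ≥0∞))⁻¹) * CH n H x r := by
      ring
    rw [hrw, ENNReal.mul_inv_cancel hC0 hCt, mul_one, hHc]
  rw [Finset.sum_congr rfl hterm]
  have huc : (Finset.univ : Finset (Fin n)).card = n := by simp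
  simp only [Finset.powerset_card_disjiUnion, Finset.sum_disjiUnion, huc]

lemma rhs_eq (n : ℕ) (lam : ℝ) (x : Fin n → Bool) (r : ℕ) :
    ((indep n fun i => rr n lam (x i)).map fun l => l.count true) r
      = ∑ H ∈ (Finset.univ : Finset (Fin n)).powerset,
          (min (ENNReal.ofReal (lam / n)) 1) ^ H.card *
            (1 - min (ENNReal.ofReal (lam / n)) 1) ^ (n - H.card) * CH n H x r := by
  classical
  set q : ℝ≥0∞ := min (ENNReal.ofReal (lam / n)) 1 with hq
  rw [indep_map_apply]
  have hprod : ∀ y : Fin n → Bool, (∏ i, rr n lam (x i) (y i))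
      = ∑ H ∈ (Finset.univ : Finset (Fin n)).powerset,
          (q * 2⁻¹) ^ H.card *
            ((1 - q) ^ (n - H.card) * (if ∀ i ∈ Hᶜ, y i = x i then 1 else 0)) := by
    intro y
    rw [Finset.prod_congr rfl (fun i _ => rr_apply n lam (x i) (y i)), Finset.prod_add]
    apply Finset.sum_congr rfl
    intro H _
    rw [Finset.prod_const, ← Finset.compl_eq_univ_sdiff, Finset.prod_mul_distrib,
      Finset.prod_const, Finset.prod_boole]
    congr 2
    · rw [Finset.card_compl]
      simp [hq]
    · split_ifs <;> rfl
  calc (∑ y : Fin n → Bool, if r = (List.ofFn y).count true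
          then ∏ i, rr n lam (x i) (y i) else 0)
      = ∑ y : Fin n → Bool, ∑ H ∈ (Finset.univ : Finset (Fin n)).powerset,
          q ^ H.card * (1 - q) ^ (n - H.card) * 2⁻¹ ^ H.card *
            (if (r = ∑ i, if y i then 1 else 0) ∧ ∀ i ∈ Hᶜ, y i = x i then 1 else 0) := by
        apply Finset.sum_congr rfl
        intro y _
        rw [count_ofFn]
        by_cases hc : r = ∑ i, if y i then 1 else 0
        · rw [if_pos hc, hprod y]
          apply Finset.sum_congr rfl
          intro H _
          by_cases hc2 : ∀ i ∈ Hᶜ, y i = x i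
          · rw [if_pos hc2, if_pos ⟨hc, hc2⟩, mul_pow]
            ring
          · rw [if_neg hc2, if_neg (fun h => hc2 h.2)]
            ring
        · rw [if_neg hc]
          symm
          apply Finset.sum_eq_zero
          intro H _
          rw [if_neg (fun h => hc h.1), mul_zero]
    _ = ∑ H ∈ (Finset.univ : Finset (Fin n)).powerset,
          q ^ H.card * (1 - q) ^ (n - H.card) * 2⁻¹ ^ H.card *
            ∑ y : Fin n → Bool,
              (if (r = ∑ i, if y i then 1 else 0) ∧ ∀ i ∈ Hᶜ, y i = x i then 1 else 0) := by
        rw [Finset.sum_comm]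
        exact Finset.sum_congr rfl fun H _ => (Finset.mul_sum _ _ _).symm
    _ = ∑ H ∈ (Finset.univ : Finset (Fin n)).powerset,
          q ^ H.card * (1 - q) ^ (n - H.card) * CH n H x r := by
        apply Finset.sum_congr rfl
        intro H _
        rw [Finset.sum_boole, card_count, CH_apply, Nat.cast_ite, Nat.cast_zero]
        ring

end Aux

/-- for every `n`, `λ ∈ (0,n)`, `x ∈ {0,1}^n` and `r ∈ {0,…,n}`,
`Pr[C_λ(x) = r] = Pr[∑ y_i = r]` where `y_i ~ R_{n,λ}(x_i)` independently. -/
theorem stmt0 (n : ℕ) (lam : ℝ) (hlam0 : 0 < lam) (hlamn : lam < n)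
    (x : Fin n → Bool) (r : ℕ) (hr : r ≤ n) :
    Cmech n lam x r =
      ((indep n fun i => rr n lam (x i)).map fun l => l.count true) r := by
  unfold Cmech
  rw [lhs_eq, rhs_eq]

end ShuffledDP
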